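/- arXiv:2302.07705 — 3 statements merged into one kernel-verified Lean document; each statement's English description precedes it below -/
import Mathlib

section
/- Let m be an integer and let z ∈ ℂ with Im z < 0. Then the function s ↦ e^{i m (z+s)}/(z+s)² is integrable on ℝ, and ∫_{−∞}^{∞} e^{i m (z+s)}/(z+s)² ds = −2πm if m > 0, and = 0 if m ≤ 0. -/
open MeasureTheory Real Filter Set FourierTransform

lemma aux_integrableOn {a : ℂ} (ha : 0 < a.re) :
    IntegrableOn (fun t : ℝ => (t : ℂ) * Complex.exp (-(a * t))) (Ioi 0) := by
  have h0 : IntegrableOn (fun t : ℝ => t ^ (1:ℝ) * Real.exp (-a.re * t ^ (1:ℝ))) (Ioi 0) :=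
    integrableOn_rpow_mul_exp_neg_mul_rpow (by norm_num) one_pos ha
  have h1 : IntegrableOn (fun t : ℝ => t * Real.exp (-(a.re * t))) (Ioi 0) := by
    refine h0.congr_fun (fun t ht => ?_) measurableSet_Ioi
    simp [Real.rpow_one, neg_mul]
  refine h1.mono' ?_ ?_
  · exact (Complex.continuous_ofReal.mul
      (Complex.continuous_exp.comp (by fun_prop))).aestronglyMeasurable
  · filter_upwards [ae_restrict_mem measurableSet_Ioi] with t ht
    have : ‖(t : ℂ) * Complex.exp (-(a * t))‖ = |t| * Real.exp (-(a.re * t)) := by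
      simp [map_mul, Complex.norm_exp]
    rw [this, abs_of_pos ht]

lemma aux_integral {a : ℂ} (ha : 0 < a.re) :
    ∫ t in Ioi (0:ℝ), (t : ℂ) * Complex.exp (-(a * t)) = 1 / a ^ 2 := by
  have ha0 : a ≠ 0 := fun h => by simp [h] at ha
  set F : ℝ → ℂ := fun t => -(((t:ℂ) / a) + 1 / a ^ 2) * Complex.exp (-(a * t)) with hF
  have hderiv : ∀ t ∈ Ici (0:ℝ), HasDerivAt F ((t:ℂ) * Complex.exp (-(a * t))) t := by
    intro t _
    have hp : HasDerivAt (fun w : ℂ => -((w / a) + 1 / a ^ 2)) (-(1 / a)) (t : ℂ) :=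
      (((hasDerivAt_id ((t:ℂ))).div_const a).add_const (1 / a ^ 2)).neg
    have hq : HasDerivAt (fun w : ℂ => Complex.exp (-(a * w)))
        (Complex.exp (-(a * t)) * (-a)) (t : ℂ) := by
      have hin : HasDerivAt (fun w : ℂ => -(a * w)) (-a) (t : ℂ) := by
        simpa using ((hasDerivAt_id ((t:ℂ))).const_mul a).fun_neg
      exact hin.cexp
    have he := (hp.mul hq).comp_ofReal
    convert he using 1
    · rfl
    field_simp
    ring
  have htends : Tendsto F atTop (nhds 0) := by
    set c1 : ℝ := ‖(1:ℂ)/a‖ with hc1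
    set c2 : ℝ := ‖(1:ℂ)/a^2‖ with hc2
    have hb1 : Tendsto (fun t : ℝ => t * Real.exp (-a.re * t)) atTop (nhds 0) := by
      simpa [Real.rpow_one] using tendsto_rpow_mul_exp_neg_mul_atTop_nhds_zero 1 a.re ha
    have hb0 : Tendsto (fun t : ℝ => Real.exp (-a.re * t)) atTop (nhds 0) := by
      simpa [Real.rpow_zero] using tendsto_rpow_mul_exp_neg_mul_atTop_nhds_zero 0 a.re ha
    have hg : Tendsto (fun t : ℝ => c1 * (t * Real.exp (-a.re * t))
        + c2 * Real.exp (-a.re * t)) atTop (nhds 0) := by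
      simpa using (hb1.const_mul c1).add (hb0.const_mul c2)
    refine squeeze_zero_norm' ?_ hg
    filter_upwards [eventually_ge_atTop (0:ℝ)] with t ht
    have hnorm : ‖F t‖ = ‖(t:ℂ)/a + 1/a^2‖ * Real.exp (-a.re * t) := by
      rw [hF, norm_mul, norm_neg]
      congr 1
      rw [Complex.norm_exp]
      congr 1
      simp [Complex.mul_re]
    rw [hnorm]
    have hta : ‖((t:ℂ))/a‖ = c1 * t := by
      rw [hc1]
      simp only [norm_div, Complex.norm_real, Real.norm_eq_abs, norm_one, abs_of_nonneg ht,
        map_one]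
      ring
    have h1 : ‖(t:ℂ)/a + 1/a^2‖ ≤ c1 * t + c2 := by
      refine (norm_add_le _ _).trans ?_
      rw [hta, hc2]
    calc ‖(t:ℂ)/a + 1/a^2‖ * Real.exp (-a.re * t)
        ≤ (c1 * t + c2) * Real.exp (-a.re * t) := by
          gcongr
      _ = c1 * (t * Real.exp (-a.re * t)) + c2 * Real.exp (-a.re * t) := by ring
  have := integral_Ioi_of_hasDerivAt_of_tendsto' hderiv (aux_integrableOn ha) htends
  rw [this, hF]
  simp


noncomputable def psi (z : ℂ) (ξ : ℝ) : ℂ :=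
  (-4 * (π:ℂ)^2) * ((max ξ 0 : ℝ) : ℂ) * Complex.exp (-(2 * (π:ℂ) * Complex.I * z * ξ))

lemma re_pos {z : ℂ} (hz : z.im < 0) (x : ℝ) : 0 < (2 * (π:ℂ) * Complex.I * (z + x)).re := by
  have : (2 * (π:ℂ) * Complex.I * (z + x)).re = 2 * π * (-z.im) := by
    simp [Complex.mul_re, Complex.mul_im]
  rw [this]
  have : 0 < -z.im := by linarith
  positivity

lemma psi_indicator (z : ℂ) : psi z = Set.indicator (Ioi 0)
    (fun ξ : ℝ => (-4 * (π:ℂ)^2) * ((ξ:ℂ) * Complex.exp (-(2 * (π:ℂ) * Complex.I * z * ξ)))) := by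
  funext ξ
  rcases le_or_gt ξ 0 with h | h
  · rw [Set.indicator_of_notMem (by simpa using not_lt.2 h)]
    simp [psi, max_eq_right h]
  · rw [Set.indicator_of_mem (by simpa using h)]
    rw [psi, max_eq_left h.le]
    ring

lemma psi_continuous (z : ℂ) : Continuous (psi z) := by
  unfold psi
  fun_prop

lemma psi_integrable {z : ℂ} (hz : z.im < 0) : Integrable (psi z) := by
  rw [psi_indicator, integrable_indicator_iff measurableSet_Ioi]
  have := (aux_integrableOn (a := 2 * (π:ℂ) * Complex.I * z) (by simpa using re_pos hz 0)).const_mul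
    (-4 * (π:ℂ)^2)
  exact this

lemma zx_ne {z : ℂ} (hz : z.im < 0) (x : ℝ) : z + (x:ℂ) ≠ 0 := by
  intro h
  have : (z + (x:ℂ)).im = 0 := by rw [h]; simp
  simp at this
  exact hz.ne this

lemma fourier_psi {z : ℂ} (hz : z.im < 0) :
    𝓕 (psi z) = fun x : ℝ => ((z + x)^2)⁻¹ := by
  funext x
  rw [Real.fourier_real_eq_integral_exp_smul]
  have key : ∀ v : ℝ, Complex.exp (↑(-2 * π * v * x) * Complex.I) • psi z v
      = Set.indicator (Ioi 0)
        (fun ξ : ℝ => (-4 * (π:ℂ)^2) * ((ξ:ℂ) *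
          Complex.exp (-(2 * (π:ℂ) * Complex.I * (z + x) * ξ)))) v := by
    intro v
    rcases le_or_gt v 0 with h | h
    · rw [Set.indicator_of_notMem (by simpa using not_lt.2 h)]
      simp [psi, max_eq_right h, smul_eq_mul]
    · rw [Set.indicator_of_mem (by simpa using h)]
      rw [smul_eq_mul, psi, max_eq_left h.le, mul_comm, mul_assoc, mul_assoc]
      congr 1
      congr 1
      rw [← Complex.exp_add]
      congr 1
      push_cast
      ring
  rw [integral_congr_ae (Eventually.of_forall key),
    integral_indicator measurableSet_Ioi, MeasureTheory.integral_const_mul,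
    aux_integral (re_pos hz x)]
  have hne : z + (x:ℂ) ≠ 0 := zx_ne hz x
  have hpi : (π:ℂ) ≠ 0 := by exact_mod_cast Real.pi_ne_zero
  have hI : Complex.I ^ 2 = -1 := Complex.I_sq
  field_simp
  ring_nf
  rw [Complex.I_sq]
  ring

lemma f_integrable {z : ℂ} (hz : z.im < 0) :
    Integrable fun x : ℝ => (((z + x):ℂ)^2)⁻¹ := by
  have hb : z.im ≠ 0 := hz.ne
  have h0 : Integrable fun x : ℝ => (1 + x^2)⁻¹ := integrable_inv_one_add_sq
  have h1 : Integrable fun x : ℝ => (1 + (x / z.im)^2)⁻¹ := h0.comp_div hb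
  have h2 : Integrable fun x : ℝ => (1 + ((x - (-z.re)) / z.im)^2)⁻¹ :=
    h1.comp_sub_right _
  refine ((h2.const_mul ((z.im^2)⁻¹)).mono' ?_ ?_)
  · refine Continuous.aestronglyMeasurable ?_
    exact ((continuous_const.add Complex.continuous_ofReal).pow 2).inv₀
      (fun x => pow_ne_zero 2 (zx_ne hz x))
  · filter_upwards with x
    have hns : ‖z + x‖ ^ 2 = (z.re + x)^2 + z.im^2 := by
      rw [Complex.sq_norm, Complex.normSq_apply]
      simp
      ring
    rw [norm_inv, norm_pow, hns]
    have heq : (z.im^2)⁻¹ * (1 + ((x - -z.re) / z.im)^2)⁻¹ = ((z.re + x)^2 + z.im^2)⁻¹ := by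
      rw [← mul_inv]
      congr 1
      field_simp
      ring
    rw [heq]

lemma inv_formula {z : ℂ} (hz : z.im < 0) (w : ℝ) :
    𝓕⁻ (fun x : ℝ => (((z + x):ℂ)^2)⁻¹) w =
      (-4 * (π:ℂ)^2) * ((max w 0 : ℝ) : ℂ) * Complex.exp (-(2 * (π:ℂ) * Complex.I * z * w)) := by
  have h := (psi_continuous z).fourierInv_fourier_eq (psi_integrable hz)
    (by rw [fourier_psi hz]; exact f_integrable hz)
  rw [← fourier_psi hz, h]
  rfl

/-- For `m ∈ ℤ` and `z` in the lower half-plane, the integral of `e^{im(z+s)}/(z+s)²`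
along the horizontal line through `z` equals `-2πm` for `m > 0` and `0` for `m ≤ 0`. -/
theorem stmt_2 (m : ℤ) (z : ℂ) (hz : z.im < 0) :
    Integrable (fun s : ℝ => Complex.exp (Complex.I * m * (z + s)) / (z + s) ^ 2) ∧
    ∫ s : ℝ, Complex.exp (Complex.I * m * (z + s)) / (z + s) ^ 2
      = if 0 < m then -2 * (Real.pi : ℂ) * (m : ℂ) else 0 := by
  have hpi : (0:ℝ) < π := Real.pi_pos
  have hint : Integrable (fun s : ℝ => Complex.exp (Complex.I * m * (z + s)) / (z + s) ^ 2) := by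
    have hb : ∀ s : ℝ, ‖Complex.exp (Complex.I * m * (z + s))‖ ≤ Real.exp (-(m * z.im)) := by
      intro s
      rw [Complex.norm_exp]
      apply le_of_eq
      congr 1
      simp [Complex.mul_re, Complex.mul_im]
      try ring
    have hmeas : AEStronglyMeasurable (fun s : ℝ => Complex.exp (Complex.I * m * (z + s)))
        volume := by
      refine Continuous.aestronglyMeasurable ?_
      fun_prop
    have := (f_integrable hz).bdd_mul (c := Real.exp (-(m * z.im))) hmeas (Eventually.of_forall hb)
    refine this.congr (Eventually.of_forall fun s => ?_)
    simp [div_eq_mul_inv]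
  refine ⟨hint, ?_⟩
  set w : ℝ := (m : ℝ) / (2 * π) with hw
  have key : ∀ s : ℝ, Complex.exp (Complex.I * m * (z + s)) / (z + s) ^ 2
      = Complex.exp (Complex.I * m * z) *
        (Complex.exp (↑(2 * π * (s * w)) * Complex.I) • (((z + s):ℂ)^2)⁻¹) := by
    intro s
    rw [smul_eq_mul, div_eq_mul_inv, ← mul_assoc, ← Complex.exp_add]
    congr 2
    have : 2 * π * (s * w) = s * m := by
      rw [hw]; field_simp; try ring
    rw [this]
    push_cast
    ring
  rw [integral_congr_ae (Eventually.of_forall key), MeasureTheory.integral_const_mul]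
  have hFinv : (∫ s : ℝ, Complex.exp (↑(2 * π * (s * w)) * Complex.I) • (((z + s):ℂ)^2)⁻¹)
      = 𝓕⁻ (fun x : ℝ => (((z + x):ℂ)^2)⁻¹) w := by
    rw [Real.fourierInv_eq']
    congr 1
    ext s
    simp [mul_comm]
  rw [hFinv, inv_formula hz w]
  have hcancel : Complex.exp (Complex.I * m * z) *
      ((-4 * (π:ℂ)^2) * ((max w 0 : ℝ) : ℂ) * Complex.exp (-(2 * (π:ℂ) * Complex.I * z * w)))
      = (-4 * (π:ℂ)^2) * ((max w 0 : ℝ) : ℂ) := by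
    have h2 : (2 * (π:ℂ) * Complex.I * z * w) = Complex.I * m * z := by
      rw [hw]
      push_cast
      have : (π:ℂ) ≠ 0 := by exact_mod_cast Real.pi_ne_zero
      field_simp
    rw [h2, mul_comm (Complex.exp _), mul_assoc, ← Complex.exp_add]
    simp
  rw [hcancel]
  rcases lt_or_ge 0 m with hm | hm
  · rw [if_pos hm]
    have hm' : (0:ℝ) < m := by exact_mod_cast hm
    have hmax : max w 0 = w := max_eq_left (le_of_lt (by rw [hw]; positivity))
    rw [hmax, hw]
    have hpi' : (π:ℂ) ≠ 0 := by exact_mod_cast Real.pi_ne_zero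
    push_cast
    field_simp
    ring
  · rw [if_neg (not_lt.2 hm)]
    have hw0 : w ≤ 0 := by
      rw [hw]
      apply div_nonpos_of_nonpos_of_nonneg
      · exact_mod_cast hm
      · positivity
    have hmax : max w 0 = 0 := max_eq_right hw0
    rw [hmax]
    simp
end

section
/- Let (g_k)_{k∈ℤ} be complex numbers with g₀ = 0 and |g_k| ≤ C·e^{−σ|k|} for some constants C, σ > 0. Fix ε > 0 and τ ∈ ℝ. Then the series g(τ + r/ε) = Σ_{k∈ℤ} g_k e^{ik(τ + r/ε)} converges for every r, the function r ↦ (2 sinh r/cosh³ r)·g(τ + r/ε) is integrable on ℝ, and −∫_{−∞}^{∞} (2 sinh r/cosh³ r)·g(τ + r/ε) dr = −i(π/ε²)·Σ_{k∈ℤ, k≠0} g_k · e^{ikτ} · k² / sinh(kπ/(2ε)). -/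
open MeasureTheory

open Set Complex


lemma phi_eq (r : ℝ) :
    2 * Real.sinh r / Real.cosh r ^ 3
      = |2 * Real.exp (-2*r) / (1 + Real.exp (-2*r))^2| *
        (4 * (2 * (1 / (1 + Real.exp (-2*r))) - 1)) := by
  have hE : Real.exp (-2*r) = Real.exp (-r) ^ 2 := by
    rw [← Real.exp_nat_mul]; norm_num
  rw [Real.sinh_eq, Real.cosh_eq, hE]
  have huv : Real.exp r * Real.exp (-r) = 1 := by
    rw [← Real.exp_add]; simp
  generalize hu : Real.exp r = u at huv
  generalize hv : Real.exp (-r) = v at huv ⊢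
  have hu0 : 0 < u := by rw [← hu]; exact Real.exp_pos _
  have hv0 : 0 < v := by rw [← hv]; exact Real.exp_pos _
  rw [abs_of_pos (by positivity)]
  have h2 : (0:ℝ) < 1 + v^2 := by positivity
  field_simp
  have hu2 : u = 1/v := by field_simp; linarith [huv]
  subst hu2; field_simp; ring

lemma fmap (r : ℝ) (a : ℝ) :
    ((1 / (1 + Real.exp (-2*r)) : ℝ) : ℂ) ^ (Complex.I * a / 2) *
      ((1 - 1 / (1 + Real.exp (-2*r)) : ℝ) : ℂ) ^ (-(Complex.I * a / 2))
      = Complex.exp (Complex.I * a * r) := by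
  have h1 : (0:ℝ) < Real.exp (-2*r) := Real.exp_pos _
  have h2 : (0:ℝ) < 1 + Real.exp (-2*r) := by linarith
  set x : ℝ := 1 / (1 + Real.exp (-2*r)) with hx
  have hx0 : 0 < x := by positivity
  have hx1 : x < 1 := by
    rw [hx, div_lt_one h2]; linarith
  have h1x : 0 < 1 - x := by linarith
  rw [Complex.cpow_def_of_ne_zero (by exact_mod_cast hx0.ne'),
      Complex.cpow_def_of_ne_zero (by exact_mod_cast h1x.ne'),
      ← Complex.ofReal_log hx0.le, ← Complex.ofReal_log h1x.le,
      ← Complex.exp_add]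
  have hratio : x / (1 - x) = Real.exp (2*r) := by
    rw [hx]
    have : (1:ℝ) - 1 / (1 + Real.exp (-2*r)) = Real.exp (-2*r) / (1 + Real.exp (-2*r)) := by
      field_simp
      ring
    rw [this]
    have he : Real.exp (2*r) * Real.exp (-(2*r)) = 1 := by rw [← Real.exp_add]; simp
    field_simp
    linarith [he]
  have hlog : Real.log x - Real.log (1 - x) = 2*r := by
    rw [← Real.log_div hx0.ne' h1x.ne', hratio, Real.log_exp]
  congr 1
  have : (Real.log x : ℂ) - (Real.log (1-x) : ℂ) = ((2*r : ℝ) : ℂ) := by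
    exact_mod_cast congrArg (fun t : ℝ => (t:ℂ)) hlog
  push_cast at this ⊢
  linear_combination (Complex.I * a / 2) * this


lemma range_f : (fun r : ℝ => 1 / (1 + Real.exp (-2*r))) '' univ = Ioo (0:ℝ) 1 := by
  rw [image_univ]
  ext x
  constructor
  · rintro ⟨r, rfl⟩
    have h1 : (0:ℝ) < Real.exp (-2*r) := Real.exp_pos _
    have h2 : (0:ℝ) < 1 + Real.exp (-2*r) := by linarith
    constructor
    · positivity
    · rw [div_lt_one h2]; linarith
  · rintro ⟨hx0, hx1⟩
    refine ⟨-(Real.log ((1-x)/x))/2, ?_⟩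
    have h1x : (0:ℝ) < 1 - x := by linarith
    have : Real.exp (-2 * (-(Real.log ((1-x)/x))/2)) = (1-x)/x := by
      rw [show -2 * (-(Real.log ((1-x)/x))/2) = Real.log ((1-x)/x) by ring]
      exact Real.exp_log (by positivity)
    show 1 / (1 + Real.exp (-2 * (-(Real.log ((1-x)/x))/2))) = x
    rw [this]
    field_simp
    ring

lemma deriv_f (r : ℝ) : HasDerivAt (fun r : ℝ => 1 / (1 + Real.exp (-2*r)))
    (2 * Real.exp (-2*r) / (1 + Real.exp (-2*r))^2) r := by
  have h1 : (0:ℝ) < Real.exp (-2*r) := Real.exp_pos _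
  have h2 : (0:ℝ) < 1 + Real.exp (-2*r) := by linarith
  have hE : HasDerivAt (fun r : ℝ => 1 + Real.exp (-2*r)) (Real.exp (-2*r) * (-2)) r := by
    have := (((hasDerivAt_id r).const_mul (-2:ℝ)).exp).const_add 1
    simpa [mul_comm] using this
  have := hE.inv h2.ne'
  simp only [one_div]
  refine this.congr_deriv ?_
  ring

lemma inj_f : Function.Injective (fun r : ℝ => 1 / (1 + Real.exp (-2*r))) := by
  intro r1 r2 h
  simp only at h
  have h1 : (0:ℝ) < 1 + Real.exp (-2*r1) := by positivity
  have h2 : (0:ℝ) < 1 + Real.exp (-2*r2) := by positivity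
  field_simp at h
  have h' := Real.exp_injective (add_left_cancel h)
  linarith


lemma beta_eval (z : ℂ) (hre : z.re = 0) (hz : z ≠ 0) :
    ∫ x in Ioo (0:ℝ) 1, ((4*(2*x-1):ℝ):ℂ) * ((x:ℂ)^z * (1-(x:ℂ))^(-z))
      = 4 * z^2 * Real.pi / Complex.sin (Real.pi * z) := by
  have hz2 : (0:ℝ) < (z+2).re := by simp [hre]
  have hz1 : (0:ℝ) < (z+1).re := by simp [hre]
  have h1z : (0:ℝ) < (1-z).re := by simp [hre]
  have hzne1 : z + 1 ≠ 0 := fun h => by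
    have := congrArg Complex.re h; simp [hre] at this
  -- integrability
  have I1 : IntegrableOn (fun x:ℝ => (x:ℂ)^(z+1) * (1-(x:ℂ))^(-z)) (Ioo (0:ℝ) 1) := by
    have := (Complex.betaIntegral_convergent hz2 h1z)
    rw [intervalIntegrable_iff_integrableOn_Ioc_of_le zero_le_one] at this
    have := this.mono_set Ioo_subset_Ioc_self
    simpa [show z+2-1 = z+1 by ring, show 1-z-1 = -z by ring] using this
  have I2 : IntegrableOn (fun x:ℝ => (x:ℂ)^z * (1-(x:ℂ))^(-z)) (Ioo (0:ℝ) 1) := by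
    have := (Complex.betaIntegral_convergent hz1 h1z)
    rw [intervalIntegrable_iff_integrableOn_Ioc_of_le zero_le_one] at this
    have := this.mono_set Ioo_subset_Ioc_self
    simpa [show z+1-1 = z by ring, show 1-z-1 = -z by ring] using this
  -- beta values
  have hB1 : Complex.betaIntegral (z+2) (1-z)
      = ∫ x in Ioo (0:ℝ) 1, (x:ℂ)^(z+1) * (1-(x:ℂ))^(-z) := by
    rw [Complex.betaIntegral, intervalIntegral.integral_of_le zero_le_one,
      integral_Ioc_eq_integral_Ioo]
    simp [show z+2-1 = z+1 by ring, show 1-z-1 = -z by ring]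
  have hB2 : Complex.betaIntegral (z+1) (1-z)
      = ∫ x in Ioo (0:ℝ) 1, (x:ℂ)^z * (1-(x:ℂ))^(-z) := by
    rw [Complex.betaIntegral, intervalIntegral.integral_of_le zero_le_one,
      integral_Ioc_eq_integral_Ioo]
    simp [show z+1-1 = z by ring, show 1-z-1 = -z by ring]
  -- split integral
  have hsplit : ∫ x in Ioo (0:ℝ) 1, ((4*(2*x-1):ℝ):ℂ) * ((x:ℂ)^z * (1-(x:ℂ))^(-z))
      = 8 * Complex.betaIntegral (z+2) (1-z) - 4 * Complex.betaIntegral (z+1) (1-z) := by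
    rw [hB1, hB2, ← integral_const_mul, ← integral_const_mul, ← integral_sub
      (I1.const_mul 8) (I2.const_mul 4)]
    refine setIntegral_congr_fun measurableSet_Ioo (fun x hx => ?_)
    have hx0 : (x:ℂ) ≠ 0 := by exact_mod_cast (ne_of_gt hx.1)
    rw [Complex.cpow_add _ _ hx0, Complex.cpow_one]
    push_cast
    ring
  rw [hsplit]
  -- Gamma evaluation
  have g3 : Complex.Gamma 3 = 2 := by
    simpa using Complex.Gamma_nat_eq_factorial 2
  have g2 : Complex.Gamma 2 = 1 := by
    simpa using Complex.Gamma_nat_eq_factorial 1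
  have e1 := Complex.Gamma_mul_Gamma_eq_betaIntegral hz2 h1z
  rw [show z+2+(1-z) = 3 by ring, g3] at e1
  have e2 := Complex.Gamma_mul_Gamma_eq_betaIntegral hz1 h1z
  rw [show z+1+(1-z) = 2 by ring, g2, one_mul] at e2
  have r1 : Complex.Gamma (z+2) = (z+1) * Complex.Gamma (z+1) := by
    have := Complex.Gamma_add_one (z+1) hzne1
    rwa [show z+1+1 = z+2 by ring] at this
  have r2 : Complex.Gamma (z+1) = z * Complex.Gamma z := Complex.Gamma_add_one z hz
  have refl := Complex.Gamma_mul_Gamma_one_sub z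
  -- combine
  have : 8 * Complex.betaIntegral (z+2) (1-z) - 4 * Complex.betaIntegral (z+1) (1-z)
      = 4 * z^2 * (Complex.Gamma z * Complex.Gamma (1-z)) := by
    have h1 : 2 * Complex.betaIntegral (z+2) (1-z) = (z+1) * (z * (Complex.Gamma z * Complex.Gamma (1-z))) := by
      rw [← e1, r1, r2]; ring
    have h2' : Complex.betaIntegral (z+1) (1-z) = z * (Complex.Gamma z * Complex.Gamma (1-z)) := by
      rw [← e2, r2]; ring
    linear_combination 4 * h1 - 4 * h2'
  rw [this, refl]
  push_cast
  ring

lemma key (a : ℝ) (ha : a ≠ 0) :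
    ∫ r : ℝ, ((2 * Real.sinh r / Real.cosh r ^ 3 : ℝ) : ℂ) * Complex.exp (Complex.I * a * r)
      = Complex.I * Real.pi * a ^ 2 / ((Real.sinh (Real.pi * a / 2) : ℝ) : ℂ) := by
  set z : ℂ := Complex.I * a / 2 with hzdef
  have hre : z.re = 0 := by simp [hzdef]
  have hz : z ≠ 0 := by
    simp only [hzdef, div_ne_zero_iff]
    constructor
    · exact mul_ne_zero Complex.I_ne_zero (by exact_mod_cast ha)
    · norm_num
  have cov := integral_image_eq_integral_abs_deriv_smul MeasurableSet.univ
      (fun x _ => (deriv_f x).hasDerivWithinAt) inj_f.injOn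
      (fun x : ℝ => ((4*(2*x-1):ℝ):ℂ) * ((x:ℂ)^z * (1-(x:ℂ))^(-z)))
  rw [range_f, Measure.restrict_univ] at cov
  have hpt : ∀ r : ℝ,
      |2 * Real.exp (-2*r) / (1 + Real.exp (-2*r))^2| •
        ((fun x : ℝ => ((4*(2*x-1):ℝ):ℂ) * ((x:ℂ)^z * (1-(x:ℂ))^(-z)))
          (1 / (1 + Real.exp (-2*r))))
      = ((2 * Real.sinh r / Real.cosh r ^ 3 : ℝ) : ℂ) * Complex.exp (Complex.I * a * r) := by
    intro r
    have hf := fmap r a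
    simp only []
    rw [Complex.real_smul]
    rw [show (1 : ℂ) - ((1 / (1 + Real.exp (-2*r)) : ℝ) : ℂ)
        = ((1 - 1 / (1 + Real.exp (-2*r)) : ℝ) : ℂ) by push_cast; ring]
    rw [show ((2 * Real.sinh r / Real.cosh r ^ 3 : ℝ) : ℂ)
        = ((|2 * Real.exp (-2*r) / (1 + Real.exp (-2*r))^2| : ℝ) : ℂ) *
          (((4 * (2 * (1 / (1 + Real.exp (-2*r))) - 1) : ℝ)) : ℂ) by
      rw [← Complex.ofReal_mul]; exact congrArg Complex.ofReal (phi_eq r)]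
    rw [← hf, ← hzdef]
    push_cast
    ring
  calc ∫ r : ℝ, ((2 * Real.sinh r / Real.cosh r ^ 3 : ℝ) : ℂ) * Complex.exp (Complex.I * a * r)
      = ∫ x in Ioo (0:ℝ) 1, ((4*(2*x-1):ℝ):ℂ) * ((x:ℂ)^z * (1-(x:ℂ))^(-z)) := by
        rw [cov]; exact (integral_congr_ae (Filter.Eventually.of_forall fun r => (hpt r))).symm
    _ = 4 * z^2 * Real.pi / Complex.sin (Real.pi * z) := beta_eval z hre hz
    _ = Complex.I * Real.pi * a ^ 2 / ((Real.sinh (Real.pi * a / 2) : ℝ) : ℂ) := by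
        rw [show (Real.pi : ℂ) * z = ((Real.pi * a / 2 : ℝ) : ℂ) * Complex.I by
          rw [hzdef]; push_cast; ring]
        rw [show Complex.sin (((Real.pi * a / 2 : ℝ) : ℂ) * Complex.I)
            = ((Real.sinh (Real.pi * a / 2) : ℝ) : ℂ) * Complex.I by
          rw [Complex.sin_mul_I, Complex.ofReal_sinh]]
        have hs : ((Real.sinh (Real.pi * a / 2) : ℝ) : ℂ) ≠ 0 := by
          rw [Complex.ofReal_ne_zero, Real.sinh_ne_zero]
          positivity
        have hz2 : z^2 = -(a:ℂ)^2/4 := by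
          rw [hzdef]; rw [div_pow, mul_pow, Complex.I_sq]; ring
        rw [hz2]
        rw [div_eq_div_iff (mul_ne_zero hs Complex.I_ne_zero) hs]
        ring_nf
        rw [Complex.I_sq]
        ring

lemma hG_int : Integrable (fun r : ℝ => 8 * Real.exp (-|r|)) := by
  have h1 : IntegrableOn (fun x : ℝ => 8 * Real.exp x) (Iic (0:ℝ)) :=
    (integrableOn_exp_Iic 0).const_mul 8
  have h1' : IntegrableOn (fun r : ℝ => 8 * Real.exp (-|r|)) (Iic (0:ℝ)) :=
    h1.congr_fun (fun x hx => by rw [abs_of_nonpos hx, neg_neg]) measurableSet_Iic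
  have h2 : IntegrableOn (fun x : ℝ => 8 * Real.exp (-1 * x)) (Ioi (0:ℝ)) :=
    (exp_neg_integrableOn_Ioi 0 one_pos).const_mul 8
  have h2' : IntegrableOn (fun r : ℝ => 8 * Real.exp (-|r|)) (Ioi (0:ℝ)) :=
    h2.congr_fun (fun x hx => by rw [abs_of_pos hx]; ring_nf) measurableSet_Ioi
  have := h1'.union h2'
  rwa [Iic_union_Ioi, integrableOn_univ] at this

lemma phi_bound (r : ℝ) : |2 * Real.sinh r / Real.cosh r ^ 3| ≤ 8 * Real.exp (-|r|) := by
  have hc : 0 < Real.cosh r := Real.cosh_pos r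
  have h1 : |2 * Real.sinh r / Real.cosh r ^ 3| = 2 * |Real.sinh r| / Real.cosh r ^ 3 := by
    rw [abs_div, abs_mul]
    simp [abs_of_pos hc, abs_of_pos (pow_pos hc 3)]
  have h2 : |Real.sinh r| ≤ Real.cosh r := by
    rw [Real.abs_sinh, ← Real.cosh_abs r]
    exact le_of_lt (Real.sinh_lt_cosh _)
  have h3 : Real.exp |r| ≤ 2 * Real.cosh r := by
    rw [Real.cosh_eq]
    rcases le_or_gt 0 r with h | h
    · rw [_root_.abs_of_nonneg h]
      have := Real.exp_pos (-r); linarith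
    · rw [abs_of_neg h]
      have := Real.exp_pos r; linarith
  have h4 : 2 * |Real.sinh r| / Real.cosh r ^ 3 ≤ 2 / Real.cosh r ^ 2 := by
    rw [div_le_div_iff₀ (by positivity) (by positivity)]
    calc 2 * |Real.sinh r| * Real.cosh r ^ 2 ≤ 2 * Real.cosh r * Real.cosh r ^ 2 := by nlinarith
      _ = 2 * Real.cosh r ^ 3 := by ring
  have hinv : Real.exp (-|r|) * Real.exp |r| = 1 := by rw [← Real.exp_add]; simp
  have h7 : 1 ≤ 2 * Real.cosh r * Real.exp (-|r|) := by
    have h8 := mul_le_mul_of_nonneg_right h3 (Real.exp_pos (-|r|)).le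
    nlinarith [hinv]
  have h5 : 2 / Real.cosh r ^ 2 ≤ 8 * Real.exp (-|r|) := by
    rw [div_le_iff₀ (by positivity)]
    nlinarith [Real.one_le_cosh r, h7, Real.exp_pos (-|r|)]
  rw [h1]
  linarith

lemma hsum_base {σ : ℝ} (hσ : 0 < σ) : Summable (fun k : ℤ => Real.exp (-σ * |(k : ℝ)|)) := by
  have hgeo : Summable (fun n : ℕ => Real.exp (-σ) ^ n) :=
    summable_geometric_of_lt_one (Real.exp_nonneg _) (Real.exp_lt_one_iff.mpr (by linarith))
  have hnat : Summable (fun n : ℕ => Real.exp (-σ * |((n : ℤ) : ℝ)|)) := by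
    refine hgeo.congr (fun n => ?_)
    rw [← Real.exp_nat_mul]
    congr 1
    push_cast
    rw [Nat.abs_cast]
    ring
  refine Summable.of_nat_of_neg hnat (hnat.congr (fun n => ?_))
  congr 1
  push_cast
  rw [abs_neg]
/-- The Melnikov integral `-∫ (2 sinh r/cosh³ r) g(τ + r/ε) dr` for
`g(θ) = Σ_k g_k e^{ikθ}` with zero mean and exponentially decaying coefficients equals
`-i(π/ε²) Σ_{k≠0} g_k e^{ikτ} k²/sinh(kπ/(2ε))`. -/
theorem stmt_6 (g : ℤ → ℂ) (C σ : ℝ) (hC : 0 < C) (hσ : 0 < σ)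
    (hg0 : g 0 = 0) (hdecay : ∀ k : ℤ, ‖g k‖ ≤ C * Real.exp (-σ * |(k : ℝ)|))
    (ε : ℝ) (hε : 0 < ε) (τ : ℝ) :
    (∀ r : ℝ, Summable (fun k : ℤ =>
        g k * Complex.exp (Complex.I * (k : ℂ) * ((τ + r / ε : ℝ) : ℂ)))) ∧
    Integrable (fun r : ℝ =>
      ((2 * Real.sinh r / (Real.cosh r) ^ 3 : ℝ) : ℂ) *
        ∑' k : ℤ, g k * Complex.exp (Complex.I * (k : ℂ) * ((τ + r / ε : ℝ) : ℂ))) ∧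
    -∫ r : ℝ, ((2 * Real.sinh r / (Real.cosh r) ^ 3 : ℝ) : ℂ) *
        ∑' k : ℤ, g k * Complex.exp (Complex.I * (k : ℂ) * ((τ + r / ε : ℝ) : ℂ))
      = -Complex.I * ((Real.pi / ε ^ 2 : ℝ) : ℂ) *
          ∑' k : ℤ, g k * Complex.exp (Complex.I * (k : ℂ) * (τ : ℂ)) * (k : ℂ) ^ 2 /
            ((Real.sinh ((k : ℝ) * Real.pi / (2 * ε)) : ℝ) : ℂ) := by
  have hnorm1 : ∀ (k : ℤ) (x : ℝ), ‖Complex.exp (Complex.I * (k : ℂ) * (x : ℂ))‖ = 1 := by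
    intro k x
    rw [show Complex.I * (k : ℂ) * (x : ℂ) = (((k : ℝ) * x : ℝ) : ℂ) * Complex.I by
      push_cast; ring]
    rw [Complex.norm_exp_ofReal_mul_I]
  have hnormterm : ∀ (k : ℤ) (x : ℝ),
      ‖g k * Complex.exp (Complex.I * (k : ℂ) * (x : ℂ))‖ ≤ C * Real.exp (-σ * |(k : ℝ)|) := by
    intro k x
    rw [norm_mul, hnorm1 k x, mul_one]
    exact hdecay k
  have hsum : Summable (fun k : ℤ => C * Real.exp (-σ * |(k : ℝ)|)) :=
    (hsum_base hσ).mul_left C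
  have claim1 : ∀ r : ℝ, Summable (fun k : ℤ =>
      g k * Complex.exp (Complex.I * (k : ℂ) * ((τ + r / ε : ℝ) : ℂ))) := by
    intro r
    exact Summable.of_norm (hsum.of_nonneg_of_le (fun k => norm_nonneg _)
      (fun k => hnormterm k _))
  -- continuity facts
  have hcont_term : ∀ k : ℤ, Continuous (fun r : ℝ =>
      g k * Complex.exp (Complex.I * (k : ℂ) * ((τ + r / ε : ℝ) : ℂ))) := by
    intro k
    exact continuous_const.mul (Complex.continuous_exp.comp
      (continuous_const.mul (Complex.continuous_ofReal.comp (by continuity))))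
  have hT_cont : Continuous (fun r : ℝ =>
      ∑' k : ℤ, g k * Complex.exp (Complex.I * (k : ℂ) * ((τ + r / ε : ℝ) : ℂ))) :=
    continuous_tsum hcont_term hsum (fun k r => hnormterm k _)
  have hphi_cont : Continuous (fun r : ℝ => ((2 * Real.sinh r / Real.cosh r ^ 3 : ℝ) : ℂ)) :=
    Complex.continuous_ofReal.comp ((continuous_const.mul Real.continuous_sinh).div
      (Real.continuous_cosh.pow 3) (fun r => by positivity))
  have hphinorm : ∀ r : ℝ, ‖((2 * Real.sinh r / Real.cosh r ^ 3 : ℝ) : ℂ)‖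
      ≤ 8 * Real.exp (-|r|) := by
    intro r
    rw [Complex.norm_real, Real.norm_eq_abs]
    exact phi_bound r
  set S : ℝ := ∑' k : ℤ, C * Real.exp (-σ * |(k : ℝ)|) with hS
  have hS0 : 0 ≤ S := tsum_nonneg (fun k => by positivity)
  have hTS : ∀ r : ℝ, ‖∑' k : ℤ, g k * Complex.exp (Complex.I * (k : ℂ) * ((τ + r / ε : ℝ) : ℂ))‖
      ≤ S := by
    intro r
    have h1 : Summable (fun k : ℤ =>
        ‖g k * Complex.exp (Complex.I * (k : ℂ) * ((τ + r / ε : ℝ) : ℂ))‖) :=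
      hsum.of_nonneg_of_le (fun k => norm_nonneg _) (fun k => hnormterm k _)
    calc ‖∑' k : ℤ, g k * Complex.exp (Complex.I * (k : ℂ) * ((τ + r / ε : ℝ) : ℂ))‖
        ≤ ∑' k : ℤ, ‖g k * Complex.exp (Complex.I * (k : ℂ) * ((τ + r / ε : ℝ) : ℂ))‖ :=
          norm_tsum_le_tsum_norm h1
      _ ≤ S := Summable.tsum_le_tsum (fun k => hnormterm k _) h1 hsum
  have claim2 : Integrable (fun r : ℝ =>
      ((2 * Real.sinh r / (Real.cosh r) ^ 3 : ℝ) : ℂ) *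
        ∑' k : ℤ, g k * Complex.exp (Complex.I * (k : ℂ) * ((τ + r / ε : ℝ) : ℂ))) := by
    refine Integrable.mono' (hG_int.mul_const S)
      ((hphi_cont.mul hT_cont).aestronglyMeasurable) ?_
    filter_upwards with r
    rw [norm_mul]
    exact mul_le_mul (hphinorm r) (hTS r) (norm_nonneg _) (by positivity)
  refine ⟨claim1, claim2, ?_⟩
  -- the integral identity
  set F : ℤ → ℝ → ℂ := fun k r => ((2 * Real.sinh r / (Real.cosh r) ^ 3 : ℝ) : ℂ) *
      (g k * Complex.exp (Complex.I * (k : ℂ) * ((τ + r / ε : ℝ) : ℂ))) with hF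
  have hF_int : ∀ k : ℤ, Integrable (F k) := by
    intro k
    refine Integrable.mono' (hG_int.mul_const (C * Real.exp (-σ * |(k : ℝ)|)))
      ((hphi_cont.mul (hcont_term k)).aestronglyMeasurable) ?_
    filter_upwards with r
    rw [hF, norm_mul]
    exact mul_le_mul (hphinorm r) (hnormterm k _) (norm_nonneg _) (by positivity)
  have hF_sum : Summable (fun k : ℤ => ∫ r : ℝ, ‖F k r‖) := by
    refine Summable.of_nonneg_of_le (fun k => integral_nonneg (fun r => norm_nonneg _))
      (fun k => ?_) (hsum.mul_left (∫ r : ℝ, 8 * Real.exp (-|r|)))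
    calc ∫ r : ℝ, ‖F k r‖
        ≤ ∫ r : ℝ, (8 * Real.exp (-|r|)) * (C * Real.exp (-σ * |(k : ℝ)|)) := by
          refine integral_mono (hF_int k).norm (hG_int.mul_const _) (fun r => ?_)
          rw [hF, norm_mul]
          exact mul_le_mul (hphinorm r) (hnormterm k _) (norm_nonneg _) (by positivity)
      _ = (∫ r : ℝ, 8 * Real.exp (-|r|)) * (C * Real.exp (-σ * |(k : ℝ)|)) :=
          integral_mul_const _ _
  have hswap : (∫ r : ℝ, ((2 * Real.sinh r / (Real.cosh r) ^ 3 : ℝ) : ℂ) *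
        ∑' k : ℤ, g k * Complex.exp (Complex.I * (k : ℂ) * ((τ + r / ε : ℝ) : ℂ)))
      = ∑' k : ℤ, ∫ r : ℝ, F k r := by
    have h := (hasSum_integral_of_summable_integral_norm hF_int hF_sum).tsum_eq
    rw [h]
    refine integral_congr_ae (Filter.Eventually.of_forall (fun r => ?_))
    simp only [hF]
    exact tsum_mul_left.symm
  rw [hswap]
  have hterm : ∀ k : ℤ, (∫ r : ℝ, F k r)
      = Complex.I * ((Real.pi / ε ^ 2 : ℝ) : ℂ) *
          (g k * Complex.exp (Complex.I * (k : ℂ) * (τ : ℂ)) * (k : ℂ) ^ 2 /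
            ((Real.sinh ((k : ℝ) * Real.pi / (2 * ε)) : ℝ) : ℂ)) := by
    intro k
    by_cases hk : k = 0
    · subst hk
      have h0 : (fun r : ℝ => F 0 r) = fun _ => (0:ℂ) := by
        funext r
        simp only [hF]
        simp [hg0]
      rw [show (∫ r : ℝ, F 0 r) = 0 by rw [h0]; exact integral_zero _ _]
      simp [hg0]
    · have hkR : ((k : ℝ)) ≠ 0 := Int.cast_ne_zero.mpr hk
      have ha : (k : ℝ) / ε ≠ 0 := div_ne_zero hkR hε.ne'
      have hsplit : ∀ r : ℝ, F k r =
          (g k * Complex.exp (Complex.I * (k : ℂ) * (τ : ℂ))) *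
            (((2 * Real.sinh r / Real.cosh r ^ 3 : ℝ) : ℂ) *
              Complex.exp (Complex.I * (((k : ℝ) / ε : ℝ) : ℂ) * (r : ℂ))) := by
        intro r
        simp only [hF]
        rw [show Complex.I * (k : ℂ) * ((τ + r / ε : ℝ) : ℂ)
            = Complex.I * (k : ℂ) * (τ : ℂ) + Complex.I * (((k : ℝ) / ε : ℝ) : ℂ) * (r : ℂ) by
          push_cast
          ring]
        rw [Complex.exp_add]
        ring
      rw [integral_congr_ae (Filter.Eventually.of_forall hsplit), integral_const_mul,
        key ((k : ℝ) / ε) ha]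
      rw [show Real.pi * ((k : ℝ) / ε) / 2 = (k : ℝ) * Real.pi / (2 * ε) by
        field_simp]
      have hεne : ((ε : ℝ) : ℂ) ≠ 0 := by exact_mod_cast hε.ne'
      push_cast
      ring
  rw [tsum_congr hterm, tsum_mul_left]
  ring
end

section
/- Let (g_k)_{k∈ℤ} be complex numbers with g₀ = 0, g_{−k} = conj(g_k) for all k, and |g_k| ≤ C·e^{−σ|k|} for some constants C, σ > 0. Define M(τ; ε) = −i(π/ε²)·Σ_{k∈ℤ, k≠0} g_k · e^{ikτ} · k² / sinh(kπ/(2ε)). Then there exist ε₀ > 0 and C′ > 0 (depending only on C and σ) such that for all ε ∈ (0, ε₀) and all τ ∈ ℝ, |M(τ; ε) − (4π/ε²)·e^{−π/(2ε)}·Im(g₁ e^{iτ})| ≤ C′·ε^{−2}·e^{−π/ε}. -/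
lemma aux_summable (σ : ℝ) (hσ : 0 < σ) :
    Summable (fun k : ℤ => (k : ℝ) ^ 2 * Real.exp (-σ * |(k : ℝ)|)) := by
  have hr : ‖Real.exp (-σ)‖ < 1 := by
    rw [Real.norm_eq_abs, abs_of_pos (Real.exp_pos _)]
    exact Real.exp_lt_one_iff.mpr (by linarith)
  have h := summable_pow_mul_geometric_of_norm_lt_one (R := ℝ) 2 hr
  have key : Summable (fun n : ℕ => ((n : ℤ) : ℝ) ^ 2 * Real.exp (-σ * |((n : ℤ) : ℝ)|)) := by
    refine h.congr fun n => ?_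
    push_cast
    rw [abs_of_nonneg (by positivity : (0:ℝ) ≤ (n:ℝ))]
    rw [show -σ * n = n * (-σ) by ring, Real.exp_nat_mul]
  refine Summable.of_nat_of_neg key (key.congr fun n => ?_)
  push_cast
  rw [abs_neg, neg_pow]
  ring_nf

lemma aux_sinh_ge (x : ℝ) (hx : 1 ≤ x) : Real.exp x / 3 ≤ Real.sinh x := by
  rw [Real.sinh_eq]
  have h1 : (3:ℝ) ≤ Real.exp (2 * x) := by
    have := Real.add_one_le_exp (2 * x)
    linarith
  have h2 : Real.exp (2 * x) = Real.exp x * Real.exp x := by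
    rw [← Real.exp_add]; ring_nf
  have h3 : Real.exp (-x) = (Real.exp x)⁻¹ := Real.exp_neg x
  have hp := Real.exp_pos x
  rw [h2] at h1
  rw [h3, div_le_div_iff₀ (by norm_num) (by norm_num)]
  have hinv : Real.exp x * (Real.exp x)⁻¹ = 1 := mul_inv_cancel₀ (ne_of_gt hp)
  nlinarith [hp, mul_pos hp hp, inv_pos.mpr hp]

lemma aux_inv_sinh (x : ℝ) (hx : 1 ≤ x) : (Real.sinh x)⁻¹ ≤ 3 * Real.exp (-x) := by
  have h := aux_sinh_ge x hx
  have hs : 0 < Real.sinh x := by positivity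
  have hp := Real.exp_pos x
  rw [Real.exp_neg]
  rw [inv_le_iff_one_le_mul₀ hs]
  calc (1:ℝ) = Real.exp x * (Real.exp x)⁻¹ := (mul_inv_cancel₀ (ne_of_gt hp)).symm
    _ ≤ 3 * (Real.exp x)⁻¹ * Real.sinh x := by
        have h3 : Real.exp x ≤ 3 * Real.sinh x := by linarith
        have := inv_pos.mpr hp
        nlinarith

lemma aux_sinh_id (x : ℝ) (hx : 0 < x) :
    (Real.sinh x)⁻¹ - 2 * Real.exp (-x) = Real.exp (-(2*x)) / Real.sinh x := by
  have hs : 0 < Real.sinh x := by positivity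
  have hne : Real.sinh x ≠ 0 := ne_of_gt hs
  rw [eq_div_iff hne, sub_mul, inv_mul_cancel₀ hne, Real.sinh_eq]
  have e1 : Real.exp (-x) * Real.exp x = 1 := by rw [← Real.exp_add]; simp
  have e2 : Real.exp (-x) * Real.exp (-x) = Real.exp (-(2*x)) := by
    rw [← Real.exp_add]; ring_nf
  have e3 : Real.exp (-(2*x)) * Real.exp x = Real.exp (-x) := by
    rw [← Real.exp_add]; ring_nf
  nlinarith [e1, e2, e3]

/-- The Melnikov function `M(τ;ε)` of the rapidly forced pendulum is dominated by its first
harmonic: `M(τ;ε) = (4π/ε²) e^{-π/(2ε)} Im(g₁ e^{iτ}) + O(ε^{-2} e^{-π/ε})`. -/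
theorem stmt_7 (g : ℤ → ℂ) (C σ : ℝ) (hC : 0 < C) (hσ : 0 < σ)
    (hg0 : g 0 = 0) (hreal : ∀ k : ℤ, g (-k) = starRingEnd ℂ (g k))
    (hdecay : ∀ k : ℤ, ‖g k‖ ≤ C * Real.exp (-σ * |(k : ℝ)|))
    (M : ℝ → ℝ → ℂ)
    (hM : ∀ τ ε : ℝ, M τ ε = -Complex.I * ((Real.pi / ε ^ 2 : ℝ) : ℂ) *
        ∑' k : ℤ, g k * Complex.exp (Complex.I * (k : ℂ) * (τ : ℂ)) * (k : ℂ) ^ 2 /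
          ((Real.sinh ((k : ℝ) * Real.pi / (2 * ε)) : ℝ) : ℂ)) :
    ∃ ε₀ > (0 : ℝ), ∃ C' > (0 : ℝ), ∀ ε ∈ Set.Ioo (0 : ℝ) ε₀, ∀ τ : ℝ,
      ‖M τ ε - (((4 * Real.pi / ε ^ 2) * Real.exp (-Real.pi / (2 * ε)) *
          (g 1 * Complex.exp (Complex.I * (τ : ℂ))).im : ℝ) : ℂ)‖
        ≤ C' * ε⁻¹ ^ 2 * Real.exp (-Real.pi / ε) := by
  have hSsum := aux_summable σ hσ
  set S : ℝ := ∑' k : ℤ, (k:ℝ)^2 * Real.exp (-σ * |(k:ℝ)|) with hStsum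
  have hS0 : 0 ≤ S := tsum_nonneg (fun k => by positivity)
  refine ⟨Real.pi/2, by positivity, 3*Real.pi*C*(2+S), by positivity, ?_⟩
  rintro ε ⟨hε0, hε1⟩ τ
  have hMτ := hM τ ε
  have hx1 : 1 < Real.pi/(2*ε) := by
    rw [lt_div_iff₀ (by positivity)]; linarith
  set x : ℝ := Real.pi/(2*ε) with hxdef
  have hx0 : 0 < x := lt_trans one_pos hx1
  have hx : 1 ≤ x := le_of_lt hx1
  have hs0 : 0 < Real.sinh x := by positivity
  set f : ℤ → ℂ := fun k => g k * Complex.exp (Complex.I * (k : ℂ) * (τ : ℂ)) * (k : ℂ) ^ 2 /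
          ((Real.sinh ((k : ℝ) * Real.pi / (2 * ε)) : ℝ) : ℂ) with hfdef
  -- norm of a single term
  have hfn : ∀ k : ℤ, ‖f k‖ = ‖g k‖ * (k:ℝ)^2 / Real.sinh (|(k:ℝ)| * x) := by
    intro k
    rw [hfdef]
    simp only []
    rw [norm_div, norm_mul, norm_mul]
    have h1 : ‖Complex.exp (Complex.I * (k:ℂ) * (τ:ℂ))‖ = 1 := by
      rw [Complex.norm_exp]; simp
    have h2 : ‖((k:ℂ))^2‖ = (k:ℝ)^2 := by
      rw [norm_pow, Complex.norm_intCast, sq_abs]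
    have h3 : ‖((Real.sinh ((k:ℝ) * Real.pi / (2*ε)) : ℝ) : ℂ)‖
        = Real.sinh (|(k:ℝ)| * x) := by
      rw [Complex.norm_real, Real.norm_eq_abs, Real.abs_sinh, hxdef]
      congr 1
      rw [abs_div, abs_mul, abs_of_pos Real.pi_pos,
        abs_of_pos (by positivity : (0:ℝ) < 2*ε)]
      ring
    rw [h1, h2, h3, mul_one]
  have habs1 : ∀ k : ℤ, k ≠ 0 → (1:ℝ) ≤ |(k:ℝ)| := by
    intro k hk
    have h2 : (1:ℤ) ≤ |k| := by rcases abs_cases k with ⟨h1,_⟩|⟨h1,_⟩ <;> omega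
    calc (1:ℝ) = ((1:ℤ):ℝ) := by norm_num
      _ ≤ ((|k|:ℤ):ℝ) := by exact_mod_cast h2
      _ = |(k:ℝ)| := by push_cast; ring
  -- pointwise bound
  have hbound : ∀ k : ℤ, ‖f k‖ ≤
      3*C*((k:ℝ)^2*Real.exp (-σ*|(k:ℝ)|)) * Real.exp (-((|(k:ℝ)| * x))) := by
    intro k
    by_cases hk : k = 0
    · subst hk
      rw [hfn 0]
      simp
    · have h1 : (1:ℝ) ≤ |(k:ℝ)| := habs1 k hk
      have hkx : 1 ≤ |(k:ℝ)| * x := by nlinarith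
      have hsk : 0 < Real.sinh ((|(k:ℝ)| * x)) := by positivity
      rw [hfn k, div_eq_mul_inv]
      have hinv := aux_inv_sinh _ hkx
      calc ‖g k‖ * (k:ℝ)^2 * (Real.sinh ((|(k:ℝ)| * x)))⁻¹
          ≤ (C * Real.exp (-σ*|(k:ℝ)|)) * (k:ℝ)^2 * (3 * Real.exp (-((|(k:ℝ)| * x)))) := by
            have hgk := hdecay k
            have hsi : 0 ≤ (Real.sinh ((|(k:ℝ)| * x)))⁻¹ := by positivity
            gcongr
        _ = 3*C*((k:ℝ)^2*Real.exp (-σ*|(k:ℝ)|)) * Real.exp (-((|(k:ℝ)| * x))) := by ring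
  have hb2 : ∀ k : ℤ, ‖f k‖ ≤ 3*C*((k:ℝ)^2*Real.exp (-σ*|(k:ℝ)|)) := by
    intro k
    refine (hbound k).trans (mul_le_of_le_one_right (by positivity) ?_)
    rw [Real.exp_le_one_iff]
    have := abs_nonneg ((k:ℝ))
    nlinarith
  have hnormsum : Summable (fun k : ℤ => ‖f k‖) :=
    Summable.of_nonneg_of_le (fun _ => norm_nonneg _) hb2 (hSsum.mul_left (3*C))
  have hsum : Summable f := hnormsum.of_norm
  -- split off the finite part
  set s3 : Finset ℤ := {-1,0,1} with hs3
  have hsplit := Summable.sum_add_tsum_compl (s := s3) hsum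
  set T : ℂ := ∑' (k : ↑(↑s3 : Set ℤ)ᶜ), f ↑k with hT
  have hfin : ∑ k ∈ s3, f k = f (-1) + f 0 + f 1 := by
    rw [hs3, show ({-1,0,1}:Finset ℤ) = insert (-1) (insert 0 {1}) from rfl,
      Finset.sum_insert (by decide), Finset.sum_insert (by decide), Finset.sum_singleton]
    ring
  have hf0 : f 0 = 0 := by
    rw [hfdef]; simp [hg0]
  set z : ℂ := g 1 * Complex.exp (Complex.I * (τ:ℂ)) with hz
  have hsne : ((Real.sinh x:ℝ):ℂ) ≠ 0 := by
    exact_mod_cast ne_of_gt hs0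
  have hf1 : f 1 = z / ((Real.sinh x:ℝ):ℂ) := by
    rw [hfdef, hz, hxdef]
    push_cast
    norm_num
  have hfm1 : f (-1) = -((starRingEnd ℂ) z) / ((Real.sinh x:ℝ):ℂ) := by
    have e1 : Real.sinh (((-1:ℤ):ℝ) * Real.pi / (2*ε)) = -Real.sinh x := by
      rw [hxdef]
      push_cast
      rw [show (-1:ℝ)*Real.pi/(2*ε) = -(Real.pi/(2*ε)) by ring, Real.sinh_neg]
    have e2 : (starRingEnd ℂ) z = g (-1) * Complex.exp (Complex.I * ((-1:ℤ):ℂ) * (τ:ℂ)) := by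
      rw [hz, map_mul, ← Complex.exp_conj, hreal 1]
      congr 1
      simp
    rw [hfdef]
    simp only []
    rw [e1, e2]
    push_cast
    ring
  have hpair : f (-1) + f 0 + f 1 = ((2*z.im:ℝ):ℂ) * Complex.I / ((Real.sinh x:ℝ):ℂ) := by
    rw [hf0, hf1, hfm1]
    rw [show -((starRingEnd ℂ) z) / ((Real.sinh x:ℝ):ℂ) + 0 + z / ((Real.sinh x:ℝ):ℂ)
        = (z - (starRingEnd ℂ) z) / ((Real.sinh x:ℝ):ℂ) by ring]
    rw [Complex.sub_conj]
  -- tail bound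
  have hTb : ‖T‖ ≤ 3*C*Real.exp (-(2*x)) * S := by
    have h1 : ‖T‖ ≤ ∑' (k : ↑(↑s3 : Set ℤ)ᶜ), ‖f ↑k‖ :=
      norm_tsum_le_tsum_norm (hnormsum.subtype _)
    have h2 : ∑' (k : ↑(↑s3 : Set ℤ)ᶜ), ‖f ↑k‖ ≤
        ∑' k : ℤ, (3*C*Real.exp (-(2*x))) * ((k:ℝ)^2 * Real.exp (-σ*|(k:ℝ)|)) := by
      refine Summable.tsum_le_tsum_of_inj (fun k => (k : ℤ)) Subtype.val_injective
        (fun c _ => by positivity) (fun k => ?_) (hnormsum.subtype _)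
        (hSsum.mul_left _)
      obtain ⟨k, hk⟩ := k
      have hknot : k ∉ s3 := by simpa using hk
      have hk2 : (2:ℝ) ≤ |(k:ℝ)| := by
        have h2 : (2:ℤ) ≤ |k| := by
          rw [hs3] at hknot
          simp only [Finset.mem_insert, Finset.mem_singleton] at hknot
          push_neg at hknot
          rcases abs_cases k with ⟨h1,_⟩|⟨h1,_⟩ <;> omega
        calc (2:ℝ) = ((2:ℤ):ℝ) := by norm_num
          _ ≤ ((|k|:ℤ):ℝ) := by exact_mod_cast h2
          _ = |(k:ℝ)| := by push_cast; ring
      have hexp : Real.exp (-((|(k:ℝ)| * x))) ≤ Real.exp (-(2*x)) := by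
        apply Real.exp_le_exp.mpr
        nlinarith
      calc ‖f k‖ ≤ 3*C*((k:ℝ)^2*Real.exp (-σ*|(k:ℝ)|)) * Real.exp (-((|(k:ℝ)| * x))) := hbound k
        _ ≤ 3*C*((k:ℝ)^2*Real.exp (-σ*|(k:ℝ)|)) * Real.exp (-(2*x)) := by
            exact mul_le_mul_of_nonneg_left hexp (by positivity)
        _ = (3*C*Real.exp (-(2*x))) * ((k:ℝ)^2*Real.exp (-σ*|(k:ℝ)|)) := by ring
    rw [tsum_mul_left] at h2
    exact h1.trans (le_of_eq_of_le rfl h2)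
  -- the first-harmonic part
  have him : |z.im| ≤ C := by
    have h1 : |z.im| ≤ ‖z‖ := Complex.abs_im_le_norm z
    have h2 : ‖z‖ = ‖g 1‖ := by
      rw [hz, norm_mul]
      have : ‖Complex.exp (Complex.I * (τ:ℂ))‖ = 1 := by
        rw [Complex.norm_exp]; simp
      rw [this, mul_one]
    have h3 := hdecay 1
    have h4 : Real.exp (-σ * |((1:ℤ):ℝ)|) ≤ 1 := by
      rw [Real.exp_le_one_iff]
      simp
      linarith
    nlinarith [norm_nonneg (g 1), Real.exp_pos (-σ * |((1:ℤ):ℝ)|)]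
  -- assemble
  rw [hMτ, ← hsplit, hfin, hpair]
  have hex1 : Real.exp (-Real.pi/(2*ε)) = Real.exp (-x) := by
    rw [hxdef]; congr 1; ring
  have hex2 : Real.exp (-Real.pi/ε) = Real.exp (-(2*x)) := by
    rw [hxdef]; congr 1; field_simp
  rw [hex1, hex2]
  have hp0 : (0:ℝ) < Real.pi/ε^2 := by positivity
  set p : ℝ := Real.pi/ε^2 with hp
  -- decompose into main + tail
  have hdecomp : -Complex.I * ((p:ℝ):ℂ) * (((2*z.im:ℝ):ℂ) * Complex.I / ((Real.sinh x:ℝ):ℂ) + T)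
      - ((4*Real.pi/ε^2 * Real.exp (-x) * z.im : ℝ):ℂ)
      = ((p * (2*z.im) * ((Real.sinh x)⁻¹ - 2*Real.exp (-x)) : ℝ):ℂ)
        + (-Complex.I * ((p:ℝ):ℂ)) * T := by
    have h4 : (4*Real.pi/ε^2 : ℝ) = p * 2 * 2 := by rw [hp]; ring
    have hA : -Complex.I * ((p:ℝ):ℂ) * (((2*z.im:ℝ):ℂ) * Complex.I / ((Real.sinh x:ℝ):ℂ))
        = ((p:ℝ):ℂ) * ((2*z.im:ℝ):ℂ) * (((Real.sinh x:ℝ):ℂ))⁻¹ := by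
      field_simp
      ring_nf
      rw [Complex.I_sq]
      ring
    rw [h4, mul_add, hA]
    push_cast
    ring
  rw [hdecomp]
  have key1 : ‖((p * (2*z.im) * ((Real.sinh x)⁻¹ - 2*Real.exp (-x)) : ℝ):ℂ)‖
      ≤ p * (2*C) * (3 * Real.exp (-(2*x))) := by
    rw [Complex.norm_real, Real.norm_eq_abs]
    rw [aux_sinh_id x hx0]
    rw [abs_mul, abs_mul]
    have e1 : |p| = p := abs_of_pos hp0
    have e2 : |Real.exp (-(2*x)) / Real.sinh x| = Real.exp (-(2*x)) * (Real.sinh x)⁻¹ := by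
      rw [abs_of_pos (by positivity), div_eq_mul_inv]
    rw [e1, e2, abs_mul]
    have e3 : |(2:ℝ)| = 2 := by norm_num
    rw [e3]
    have hinv : (Real.sinh x)⁻¹ ≤ 3 * Real.exp (-x) := aux_inv_sinh x hx
    have hex : Real.exp (-x) ≤ 1 := by rw [Real.exp_le_one_iff]; linarith
    have h5 : Real.exp (-(2*x)) * (Real.sinh x)⁻¹ ≤ 3 * Real.exp (-(2*x)) := by
      calc Real.exp (-(2*x)) * (Real.sinh x)⁻¹ ≤ Real.exp (-(2*x)) * (3 * Real.exp (-x)) :=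
            mul_le_mul_of_nonneg_left hinv (le_of_lt (Real.exp_pos _))
        _ ≤ 3 * Real.exp (-(2*x)) := by nlinarith [Real.exp_pos (-(2*x))]
    refine mul_le_mul (mul_le_mul_of_nonneg_left (by linarith) (le_of_lt hp0)) h5
      (by positivity) (by positivity)
  have key2 : ‖-Complex.I * ((p:ℝ):ℂ) * T‖ ≤ p * (3*C*Real.exp (-(2*x)) * S) := by
    rw [norm_mul, norm_mul, norm_neg, Complex.norm_I, one_mul, Complex.norm_real,
      Real.norm_eq_abs, abs_of_pos hp0]
    exact mul_le_mul_of_nonneg_left hTb (le_of_lt hp0)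
  refine le_trans (le_trans (norm_add_le _ _) (add_le_add key1 key2)) (le_of_eq ?_)
  rw [hp]
  field_simp
end
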